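/- Let G be the sequence defined by G(0) = G(1) = 1 and G(n) = 2·∑_{m=1}^{n−1} G(m)·G(n−1−m) for n ≥ 2. Then for every real x with 0 < |x| < (√2 − 1)/2, the series ∑_{n≥0} G(n)·xⁿ converges and its sum equals (2x + 1 − √(1 − 4x − 4x²)) / (4x). -/

import Mathlib

open Finset


lemma tri_le_box (a : ℕ → ℝ) (ha : ∀ n, 0 ≤ a n) (N : ℕ) :
    ∑ k ∈ Finset.range N, ∑ m ∈ Finset.range (k+1), a m * a (k - m)
      ≤ (∑ m ∈ Finset.range N, a m) ^ 2 := by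
  have hL : ∑ k ∈ Finset.range N, ∑ m ∈ Finset.range (k+1), a m * a (k - m)
      = ∑ p ∈ (Finset.range N ×ˢ Finset.range N).filter (fun p => p.1 + p.2 < N),
          a p.1 * a p.2 := by
    rw [Finset.sum_sigma']
    refine Finset.sum_nbij' (fun p => (p.2, p.1 - p.2)) (fun q => ⟨q.1 + q.2, q.1⟩) ?_ ?_ ?_ ?_ ?_
    · intro p hp
      simp only [Finset.mem_sigma, Finset.mem_range] at hp
      simp only [Finset.mem_filter, Finset.mem_product, Finset.mem_range]
      omega
    · intro q hq
      simp only [Finset.mem_filter, Finset.mem_product, Finset.mem_range] at hq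
      simp only [Finset.mem_sigma, Finset.mem_range]
      omega
    · intro p hp
      simp only [Finset.mem_sigma, Finset.mem_range] at hp
      simp only []
      have h1 : p.snd + (p.fst - p.snd) = p.fst := by omega
      exact Sigma.ext h1 HEq.rfl
    · intro q hq; simp
    · intro p hp; rfl
  rw [hL, sq, Finset.sum_mul_sum, ← Finset.sum_product']
  refine Finset.sum_le_sum_of_subset_of_nonneg (Finset.filter_subset _ _) ?_
  intro p _ _
  exact mul_nonneg (ha _) (ha _)


lemma dpos {t : ℝ} (ht : 0 < t) (htr : t < (Real.sqrt 2 - 1) / 2) :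
    0 < 1 - 4*t - 4*t^2 := by
  have h2 : (Real.sqrt 2)^2 = 2 := Real.sq_sqrt (by norm_num)
  have h2' : 0 ≤ Real.sqrt 2 := Real.sqrt_nonneg 2
  nlinarith [sq_nonneg (2*t + 1 - Real.sqrt 2)]

lemma Lroot {t : ℝ} (ht : 0 < t) (hD : 0 < 1 - 4*t - 4*t^2) :
    2*t*((2*t+1-Real.sqrt (1-4*t-4*t^2))/(4*t))^2
      - (2*t+1)*((2*t+1-Real.sqrt (1-4*t-4*t^2))/(4*t)) + (1+t) = 0 := by
  have hs2 : (Real.sqrt (1-4*t-4*t^2))^2 = 1-4*t-4*t^2 := Real.sq_sqrt hD.le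
  have h4t : (4*t) ≠ 0 := by positivity
  generalize Real.sqrt (1-4*t-4*t^2) = s at hs2 ⊢
  field_simp
  nlinarith [hs2]

lemma Lge1 {t : ℝ} (ht : 0 < t) (htr : t < (Real.sqrt 2 - 1) / 2) :
    1 ≤ (2*t+1-Real.sqrt (1-4*t-4*t^2))/(4*t) := by
  have hD := dpos ht htr
  have ht2 : t < 1/2 := by
    have h2 : (Real.sqrt 2)^2 = 2 := Real.sq_sqrt (by norm_num)
    nlinarith [Real.sqrt_nonneg 2, sq_nonneg (Real.sqrt 2 - 3/2)]
  have hle : Real.sqrt (1-4*t-4*t^2) ≤ 1 - 2*t := by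
    rw [show (1:ℝ) - 2*t = Real.sqrt ((1-2*t)^2) by
      rw [Real.sqrt_sq (by linarith)]]
    exact Real.sqrt_le_sqrt (by nlinarith)
  rw [le_div_iff₀ (by positivity)]
  linarith

lemma partial_bound (g : ℕ → ℝ) (hg0 : g 0 = 1) (hg1 : g 1 = 1)
    (hgpos : ∀ n, 0 ≤ g n)
    (grec : ∀ n, 2 ≤ n → g n = 2 * ∑ m ∈ Finset.Ico 1 n, g m * g (n - 1 - m))
    {t : ℝ} (ht : 0 < t) (htr : t < (Real.sqrt 2 - 1) / 2) :
    ∀ N, ∑ n ∈ Finset.range N, g n * t^n ≤ (2*t+1-Real.sqrt (1-4*t-4*t^2))/(4*t) := by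
  set L := (2*t+1-Real.sqrt (1-4*t-4*t^2))/(4*t) with hL
  have hD := dpos ht htr
  have hroot := Lroot ht hD
  have hL1 : 1 ≤ L := Lge1 ht htr
  intro N
  induction N with
  | zero => simpa using by linarith
  | succ N IH =>
    rcases Nat.eq_zero_or_pos N with hN0 | hNpos
    · subst hN0; simpa [hg0] using hL1
    set S := ∑ n ∈ Finset.range N, g n * t^n with hS
    have hS1 : 1 ≤ S := by
      have : g 0 * t^0 ≤ S :=
        Finset.single_le_sum (f := fun n => g n * t^n)
          (fun i _ => mul_nonneg (hgpos i) (by positivity)) (Finset.mem_range.2 hNpos)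
      simpa [hg0] using this
    -- key step: sum over range (N+1) ≤ 1 + t + 2*t*(S^2 - S)
    obtain ⟨M, rfl⟩ : ∃ M, N = M + 1 := ⟨N - 1, by omega⟩
    have key : ∑ n ∈ Finset.range (M+2), g n * t^n ≤ 1 + t + 2*t*(S^2 - S) := by
      set c : ℕ → ℝ := fun k => ∑ m ∈ Finset.range (k+1), g m * g (k - m) with hc
      have hsplit : ∑ n ∈ Finset.range (M+2), g n * t^n
          = (1 + t) + ∑ n ∈ Finset.Ico 2 (M+2), g n * t^n := by
        rw [Finset.range_eq_Ico, ← Finset.sum_Ico_consecutive _ (by omega : 0 ≤ 2) (by omega : 2 ≤ M+2)]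
        congr 1
        simp [Finset.sum_range_succ, hg0, hg1]
      have hT : ∑ n ∈ Finset.Ico 2 (M+2), g n * t^n
          = 2*t*((∑ i ∈ Finset.range M, c (i+1) * t^(i+1))
                 - (∑ i ∈ Finset.range M, g (i+1) * t^(i+1))) := by
        rw [Finset.sum_Ico_eq_sum_range]
        have : ∀ i ∈ Finset.range (M+2-2), g (2+i) * t^(2+i)
            = 2*t*((c (i+1) - g (i+1)) * t^(i+1)) := by
          intro i _
          rw [grec (2+i) (by omega)]
          have h1 : ∑ m ∈ Finset.Ico 1 (2+i), g m * g (2+i-1-m)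
              = c (i+1) - g (i+1) := by
            have h2 : c (i+1) = g 0 * g (i+1) + ∑ m ∈ Finset.Ico 1 (i+2), g m * g (i+1-m) := by
              rw [hc]
              simp only [Finset.range_eq_Ico]
              rw [Finset.sum_eq_sum_Ico_succ_bot (by omega)]
              norm_num
            have h3 : ∑ m ∈ Finset.Ico 1 (2+i), g m * g (2+i-1-m)
                = ∑ m ∈ Finset.Ico 1 (i+2), g m * g (i+1-m) := by
              apply Finset.sum_congr (by congr 1; omega)
              intro m hm
              congr 2
              omega
            rw [h3, h2, hg0]; ring
          rw [h1, show (2+i) = (i+1)+1 by omega, pow_succ]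
          ring
        rw [Finset.sum_congr rfl this, ← Finset.mul_sum,
          show M + 2 - 2 = M by omega]
        congr 1
        rw [← Finset.sum_sub_distrib]
        exact Finset.sum_congr rfl (fun i _ => by ring)
      have hgS : ∑ i ∈ Finset.range M, g (i+1) * t^(i+1) = S - 1 := by
        have := Finset.sum_range_succ' (fun n => g n * t^n) M
        rw [hS, this, hg0]
        simp
      have hcS : ∑ i ∈ Finset.range M, c (i+1) * t^(i+1) ≤ S^2 - 1 := by
        have hfull : ∑ k ∈ Finset.range (M+1), c k * t^k ≤ S^2 := by
          have heq : ∀ k ∈ Finset.range (M+1), c k * t^k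
              = ∑ m ∈ Finset.range (k+1), (g m * t^m) * (g (k-m) * t^(k-m)) := by
            intro k _
            rw [hc, Finset.sum_mul]
            apply Finset.sum_congr rfl
            intro m hm
            have hmk : m ≤ k := by simpa [Nat.lt_succ_iff] using hm
            rw [show t^k = t^m * t^(k-m) by rw [← pow_add]; congr 1; omega]
            ring
          rw [Finset.sum_congr rfl heq]
          exact tri_le_box (fun n => g n * t^n)
            (fun n => mul_nonneg (hgpos n) (by positivity)) (M+1)
        have := Finset.sum_range_succ' (fun k => c k * t^k) M
        have hc0 : c 0 = 1 := by simp [hc, hg0]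
        rw [this, hc0] at hfull
        simp at hfull
        linarith
      rw [hsplit, hT, hgS]
      nlinarith [hcS]
    have hmono : S^2 - S ≤ L^2 - L := by nlinarith
    nlinarith

set_option maxHeartbeats 1000000 in
theorem stmt_6 (G : ℕ → ℕ) (hG0 : G 0 = 1) (hG1 : G 1 = 1)
    (hGrec : ∀ n, 2 ≤ n → G n = 2 * ∑ m ∈ Finset.Ico 1 n, G m * G (n - 1 - m)) :
    ∀ x : ℝ, 0 < |x| → |x| < (Real.sqrt 2 - 1) / 2 →
      HasSum (fun n : ℕ => (G n : ℝ) * x ^ n)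
        ((2 * x + 1 - Real.sqrt (1 - 4 * x - 4 * x ^ 2)) / (4 * x)) := by
  intro x hx hxr
  set g : ℕ → ℝ := fun n => (G n : ℝ) with hgdef
  have hg0 : g 0 = 1 := by simp [hgdef, hG0]
  have hg1 : g 1 = 1 := by simp [hgdef, hG1]
  have hgpos : ∀ n, 0 ≤ g n := fun n => Nat.cast_nonneg _
  have grec : ∀ n, 2 ≤ n → g n = 2 * ∑ m ∈ Finset.Ico 1 n, g m * g (n-1-m) := by
    intro n hn
    simp only [hgdef]
    rw [hGrec n hn]
    push_cast
    ring
  set t := |x| with htdef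
  have ht : 0 < t := hx
  have htr : t < (Real.sqrt 2 - 1)/2 := hxr
  have hDt : 0 < 1 - 4*t - 4*t^2 := dpos ht htr
  set L := (2*t+1-Real.sqrt (1-4*t-4*t^2))/(4*t) with hLdef
  have hbound := partial_bound g hg0 hg1 hgpos grec ht htr
  have htermpos : ∀ n, 0 ≤ g n * t^n := fun n => mul_nonneg (hgpos n) (by positivity)
  have hsummt : Summable (fun n => g n * t^n) := summable_of_sum_range_le htermpos hbound
  have hSt_le : (∑' n, g n * t^n) ≤ L := Real.tsum_le_of_sum_range_le htermpos hbound
  have habs : ∀ n, |g n * x^n| = g n * t^n := by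
    intro n
    rw [abs_mul, abs_pow, abs_of_nonneg (hgpos n)]
  have habs' : Summable (fun n => |g n * x^n|) := (summable_congr habs).2 hsummt
  have hsumx : Summable (fun n => g n * x^n) := habs'.of_abs
  set S := ∑' n, g n * x^n with hSdef
  have hA : HasSum (fun n => g n * x^n) S := hsumx.hasSum
  have hnorm : Summable (fun n => ‖g n * x^n‖) := by
    simp only [Real.norm_eq_abs]
    exact habs'
  have hconv : HasSum (fun n => ∑ m ∈ Finset.range (n+1), (g m * x^m) * (g (n-m) * x^(n-m)))
      (S*S) := by
    have h := hasSum_sum_range_mul_of_summable_norm hnorm hnorm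
    rwa [← hSdef] at h
  set c : ℕ → ℝ := fun k => ∑ m ∈ Finset.range (k+1), g m * g (k-m) with hcdef
  have hc0 : c 0 = 1 := by simp [hcdef, hg0]
  have hconv' : HasSum (fun n => c n * x^n) (S*S) := by
    convert hconv using 2 with n
    rw [hcdef]
    simp only
    rw [Finset.sum_mul]
    apply Finset.sum_congr rfl
    intro m hm
    have hmn : m ≤ n := by simpa [Nat.lt_succ_iff] using hm
    rw [show x^n = x^m * x^(n-m) by rw [← pow_add]; congr 1; omega]
    ring
  have h1s : HasSum (fun n => g (n+1) * x^(n+1)) (S - 1) := by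
    refine (hasSum_nat_add_iff (f := fun n => g n * x^n) 1).2 ?_
    convert hA using 1
    · rfl
    simp [hg0]
  have h2s : HasSum (fun n => g (n+2) * x^(n+2)) (S - 1 - x) := by
    refine (hasSum_nat_add_iff (f := fun n => g n * x^n) 2).2 ?_
    convert hA using 1
    · rfl
    rw [Finset.sum_range_succ, Finset.sum_range_succ, Finset.sum_range_zero]
    rw [hg0, hg1]
    ring
  have hcs : HasSum (fun n => c (n+1) * x^(n+1)) (S*S - 1) := by
    refine (hasSum_nat_add_iff (f := fun n => c n * x^n) 1).2 ?_
    convert hconv' using 1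
    · rfl
    simp [hc0]
  have hrhs : HasSum (fun n => g (n+2) * x^(n+2)) (2*x*((S*S-1) - (S-1))) := by
    have hh := (hcs.sub h1s).mul_left (2*x)
    convert hh using 2 with n
    · rfl
    rw [grec (n+2) (by omega)]
    have hkey : ∑ m ∈ Finset.Ico 1 (n+2), g m * g (n+2-1-m) = c (n+1) - g (n+1) := by
      have h2 : c (n+1) = g 0 * g (n+1) + ∑ m ∈ Finset.Ico 1 (n+2), g m * g (n+1-m) := by
        rw [hcdef]
        simp only [Finset.range_eq_Ico]
        rw [Finset.sum_eq_sum_Ico_succ_bot (by omega)]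
        norm_num
      have h3 : ∑ m ∈ Finset.Ico 1 (n+2), g m * g (n+2-1-m)
          = ∑ m ∈ Finset.Ico 1 (n+2), g m * g (n+1-m) := by
        apply Finset.sum_congr rfl
        intro m hm
        have hmm : n+2-1-m = n+1-m := by omega
        rw [hmm]
      rw [h3, h2, hg0]; ring
    rw [hkey, show n+2 = (n+1)+1 by omega, pow_succ]
    try ring
  have hquad : S - 1 - x = 2*x*((S*S-1) - (S-1)) := h2s.unique hrhs
  have hx0 : x ≠ 0 := abs_pos.mp hx
  have hDx : 0 < 1 - 4*x - 4*x^2 := by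
    have hx_le : x ≤ t := le_abs_self x
    have hsq : x^2 = t^2 := (sq_abs x).symm
    nlinarith
  set s := Real.sqrt (1 - 4*x - 4*x^2) with hsdef
  have hs2 : s^2 = 1 - 4*x - 4*x^2 := Real.sq_sqrt hDx.le
  have hs_pos : 0 < s := Real.sqrt_pos.2 hDx
  set v := (2*x+1-s)/(4*x) with hvdef
  set vp := (2*x+1+s)/(4*x) with hvpdef
  suffices hSv : S = v by
    have : HasSum (fun n => g n * x^n) v := hSv ▸ hA
    convert this using 2
  have hP : 2*x*S^2 - (2*x+1)*S + (1+x) = 0 := by nlinarith [hquad]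
  have hfac : (S - v) * (S - vp) = 0 := by
    have h2x : (2*x) ≠ 0 := by simpa using hx0
    apply mul_left_cancel₀ h2x
    rw [mul_zero]
    rw [hvdef, hvpdef]
    field_simp
    nlinarith [hP, hs2]
  rcases mul_eq_zero.1 hfac with h | h
  · linarith [sub_eq_zero.1 h]
  have hSvp : S = vp := by linarith [sub_eq_zero.1 h]
  exfalso
  have h4xS : 4*x*S = 2*x+1+s := by
    rw [hSvp, hvpdef]
    field_simp
  rcases lt_or_gt_of_ne hx0 with hxneg | hxposi
  · -- x < 0
    have hts : t = -x := abs_of_neg hxneg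
    have hst : Real.sqrt (1-4*t-4*t^2) ≤ 2*t+1 := by
      nlinarith [Real.sq_sqrt hDt.le, Real.sqrt_nonneg (1-4*t-4*t^2), ht]
    have hstnn : 0 ≤ Real.sqrt (1-4*t-4*t^2) := Real.sqrt_nonneg _
    have h4tL : 4*t*L = 2*t+1-Real.sqrt (1-4*t-4*t^2) := by
      rw [hLdef]; field_simp
    have hSSt : 2 ≤ S + ∑' n, g n * t^n := by
      have hadd : HasSum (fun n => g n * x^n + g n * t^n) (S + ∑' n, g n * t^n) :=
        hA.add hsummt.hasSum
      have hnn : ∀ n, 0 ≤ g n * x^n + g n * t^n := by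
        intro n
        have : |x^n| = t^n := by rw [← abs_pow]
        nlinarith [neg_abs_le (x^n), hgpos n, (abs_nonneg (x^n))]
      have h0 : g 0 * x^0 + g 0 * t^0 = 2 := by rw [hg0]; ring
      have := le_hasSum hadd 0 (fun j _ => hnn j)
      rw [h0] at this
      linarith
    have hS_ge : 2 - L ≤ S := by linarith
    have h1 : 8*t - 4*t*L ≤ 4*t*S := by
      have h := mul_le_mul_of_nonneg_left hS_ge (show (0:ℝ) ≤ 4*t by positivity)
      ring_nf at h ⊢
      linarith [h]
    have h2 : 4*t*S = -(2*x+1+s) := by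
      rw [hts]
      linear_combination -h4xS
    linarith [h1, h2, h4tL, hstnn, hs_pos.le, ht, hts]
  · -- x > 0
    have hts : t = x := abs_of_pos hxposi
    have hSL : S ≤ L := by
      rw [hSdef]
      calc ∑' n, g n * x^n = ∑' n, g n * t^n := by rw [hts]
      _ ≤ L := hSt_le
    have hvL : v = L := by rw [hvdef, hLdef, hts, hsdef]
    have hdiff : vp - v = s/(2*x) := by
      rw [hvdef, hvpdef]
      field_simp
      ring
    have hvvp : v < vp := by
      have h1 : 0 < vp - v := by rw [hdiff]; positivity
      linarith
    linarith
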